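/- Combes–Thomas type estimate (abstract version): Let H be a self-adjoint operator on ℓ²(Λ) for a finite set Λ with a metric d, let z ∈ ℂ with μ = dist(z, σ(H)) > 0, and suppose for some α > 0 that S_α := sup_x Σ_y |H(x,y)| (e^{α d(x,y)} − 1) < μ. Then for all x, y ∈ Λ, |⟨δ_x, (H − z)⁻¹ δ_y⟩| ≤ (μ − S_α)⁻¹ e^{−α d(x,y)}. -/

import Mathlib

open scoped Pointwise

section helpers
variable {Λ : Type*} [Fintype Λ] [DecidableEq Λ]

lemma ct_apply (A : Matrix Λ Λ ℂ) (f : EuclideanSpace ℂ Λ) (u : Λ) :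
    (Matrix.toEuclideanCLM (𝕜 := ℂ) A f) u = ∑ v, A u v * f v := rfl

lemma ct_entry (A : Matrix Λ Λ ℂ) (x y : Λ) :
    (inner ℂ (EuclideanSpace.single x (1 : ℂ))
      (Matrix.toEuclideanCLM (𝕜 := ℂ) A (EuclideanSpace.single y (1 : ℂ))) : ℂ) = A x y := by
  rw [EuclideanSpace.inner_single_left, ct_apply]
  simp [EuclideanSpace.single, Pi.single_apply, mul_ite]

lemma ct_exp_aux {s t : ℝ} (h : |s| ≤ t) : |Real.exp s - 1| ≤ Real.exp t - 1 := by
  have h1 : Real.exp s ≤ Real.exp t := Real.exp_le_exp.2 ((le_abs_self s).trans h)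
  have h2 : Real.exp (-t) ≤ Real.exp s := Real.exp_le_exp.2 (by
    have := neg_abs_le s; linarith)
  have h3 : Real.exp (-t) = (Real.exp t)⁻¹ := Real.exp_neg t
  have h4 : 0 < Real.exp t := Real.exp_pos t
  rw [abs_le]
  constructor
  · have h5 : Real.exp (-t) * Real.exp t = 1 := by rw [← Real.exp_add]; simp
    nlinarith [sq_nonneg (Real.exp t - 1)]
  · linarith


set_option linter.unusedSectionVars false in
lemma ct_resolvent (H : EuclideanSpace ℂ Λ →L[ℂ] EuclideanSpace ℂ Λ) (hH : IsSelfAdjoint H)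
    (z : ℂ) (μ : ℝ) (hμ : μ = Metric.infDist z (spectrum ℂ H)) (hpos : 0 < μ) :
    IsUnit (H - z • (1 : EuclideanSpace ℂ Λ →L[ℂ] EuclideanSpace ℂ Λ)) ∧
      ‖Ring.inverse (H - z • (1 : EuclideanSpace ℂ Λ →L[ℂ] EuclideanSpace ℂ Λ))‖ ≤ μ⁻¹ := by
  have hz : z ∉ spectrum ℂ H := by
    intro hz
    rw [hμ] at hpos
    simp [Metric.infDist_zero_of_mem hz] at hpos
  have hsmul : (z • (1 : EuclideanSpace ℂ Λ →L[ℂ] EuclideanSpace ℂ Λ)) = algebraMap ℂ (EuclideanSpace ℂ Λ →L[ℂ] EuclideanSpace ℂ Λ) z :=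
    (Algebra.algebraMap_eq_smul_one z).symm
  have hunit0 : IsUnit (algebraMap ℂ (EuclideanSpace ℂ Λ →L[ℂ] EuclideanSpace ℂ Λ) z - H) := spectrum.notMem_iff.mp hz
  have hunit : IsUnit (H - z • (1 : EuclideanSpace ℂ Λ →L[ℂ] EuclideanSpace ℂ Λ)) := by
    rw [hsmul, ← neg_sub]
    exact hunit0.neg
  refine ⟨hunit, ?_⟩
  obtain ⟨u, hu⟩ := id hunit
  set c : EuclideanSpace ℂ Λ →L[ℂ] EuclideanSpace ℂ Λ := H - z • (1 : EuclideanSpace ℂ Λ →L[ℂ] EuclideanSpace ℂ Λ) with hc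
  -- star c
  have hstarc : star c = H - (starRingEnd ℂ z) • (1 : EuclideanSpace ℂ Λ →L[ℂ] EuclideanSpace ℂ Λ) := by
    rw [hc]
    show ContinuousLinearMap.adjoint (H - z • 1) = _
    rw [map_sub, LinearIsometryEquiv.map_smulₛₗ,
      ContinuousLinearMap.isSelfAdjoint_iff'.mp hH]
    congr 1
    rw [show (1 : EuclideanSpace ℂ Λ →L[ℂ] EuclideanSpace ℂ Λ)
        = ContinuousLinearMap.id ℂ _ from rfl]
    rw [ContinuousLinearMap.adjoint_id]
  have hcomm : Commute (star c) c := by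
    rw [hstarc, hc]
    show _ = _
    simp only [sub_mul, mul_sub, smul_mul_assoc, mul_smul_comm, one_mul, mul_one, smul_smul,
      smul_sub]
    rw [mul_comm ((starRingEnd ℂ) z) z]
    abel
  have hcu : IsStarNormal c := ⟨hcomm⟩
  have hRinv : Ring.inverse c = ↑u⁻¹ := by rw [← hu, Ring.inverse_unit]
  haveI hnormal : IsStarNormal (Ring.inverse c) := by
    constructor
    obtain ⟨u', hu'⟩ := hunit.star
    have hst : star (Ring.inverse c) = Ring.inverse (star c) := (Ring.inverse_star c).symm
    rw [hst, hRinv, ← hu', Ring.inverse_unit]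
    have h1 : Commute (↑u : EuclideanSpace ℂ Λ →L[ℂ] EuclideanSpace ℂ Λ) ↑u' := by rw [hu, hu']; exact hcomm.symm
    exact (h1.units_inv_left.units_inv_right).symm
  -- spectral radius
  have hsp : spectralRadius ℂ (Ring.inverse c) = ‖Ring.inverse c‖₊ :=
    IsStarNormal.spectralRadius_eq_nnnorm _
  have hspec_c : spectrum ℂ c = spectrum ℂ H - ({z} : Set ℂ) := by
    rw [hc, hsmul]
    exact (spectrum.sub_singleton_eq H z).symm
  have hspec : spectrum ℂ (Ring.inverse c) = (spectrum ℂ c)⁻¹ := by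
    rw [hRinv, ← spectrum.map_inv, hu]
  have hbound : ∀ k ∈ spectrum ℂ (Ring.inverse c), ‖k‖ ≤ μ⁻¹ := by
    intro k hk
    rw [hspec, hspec_c, Set.mem_inv] at hk
    obtain ⟨t, ht, w, hw, hsub⟩ := hk
    rw [Set.mem_singleton_iff] at hw
    simp only [hw] at hsub
    have hkk : k = (t - z)⁻¹ := by rw [show t - z = k⁻¹ from hsub, inv_inv]
    rw [hkk]
    have hd : μ ≤ ‖t - z‖ := by
      rw [hμ]
      calc Metric.infDist z (spectrum ℂ H) ≤ dist z t := Metric.infDist_le_dist_of_mem ht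
        _ = ‖t - z‖ := by rw [dist_eq_norm, ← norm_neg]; ring_nf
    rw [norm_inv]
    exact inv_anti₀ hpos hd
  have hfin : ‖Ring.inverse c‖₊ ≤ μ⁻¹.toNNReal := by
    have h2 : spectralRadius ℂ (Ring.inverse c) ≤ ((μ⁻¹.toNNReal : NNReal) : ENNReal) := by
      rw [spectralRadius]
      apply iSup₂_le
      intro k hk
      have hb := hbound k hk
      have h1 : ‖k‖₊ = Real.toNNReal ‖k‖ := norm_toNNReal.symm
      rw [h1]
      exact ENNReal.coe_le_coe.mpr (Real.toNNReal_mono hb)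
    rw [hsp] at h2
    exact_mod_cast h2
  have := hfin
  rw [← NNReal.coe_le_coe] at this
  calc ‖Ring.inverse c‖ = (‖Ring.inverse c‖₊ : ℝ) := rfl
    _ ≤ (μ⁻¹.toNNReal : ℝ) := this
    _ = μ⁻¹ := Real.coe_toNNReal _ (by positivity)

end helpers

open Finset in
lemma ct_schur {Λ : Type*} [Fintype Λ] [DecidableEq Λ] (B : Matrix Λ Λ ℂ) (S : ℝ) (hS : 0 ≤ S)
    (hrow : ∀ u, ∑ v, ‖B u v‖ ≤ S) (hcol : ∀ v, ∑ u, ‖B u v‖ ≤ S) :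
    ‖Matrix.toEuclideanCLM (𝕜 := ℂ) B‖ ≤ S := by
  apply ContinuousLinearMap.opNorm_le_bound _ hS
  intro f
  have key : ∑ u, ‖(Matrix.toEuclideanCLM (𝕜 := ℂ) B f) u‖ ^ 2 ≤ (S * ‖f‖) ^ 2 := by
    have step1 : ∀ u, ‖(Matrix.toEuclideanCLM (𝕜 := ℂ) B f) u‖ ^ 2 ≤
        S * ∑ v, ‖B u v‖ * ‖f v‖ ^ 2 := by
      intro u
      have h1 : ‖(Matrix.toEuclideanCLM (𝕜 := ℂ) B f) u‖ ≤ ∑ v, ‖B u v‖ * ‖f v‖ := by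
        rw [show (Matrix.toEuclideanCLM (𝕜 := ℂ) B f) u = ∑ v, B u v * f v from rfl]
        exact (norm_sum_le _ _).trans (by simp)
      have h2 : (∑ v, ‖B u v‖ * ‖f v‖) ^ 2 ≤
          (∑ v, ‖B u v‖) * ∑ v, ‖B u v‖ * ‖f v‖ ^ 2 := by
        have := sum_mul_sq_le_sq_mul_sq univ (fun v => Real.sqrt ‖B u v‖)
          (fun v => Real.sqrt ‖B u v‖ * ‖f v‖)
        have e1 : ∀ v : Λ, Real.sqrt ‖B u v‖ * (Real.sqrt ‖B u v‖ * ‖f v‖)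
            = ‖B u v‖ * ‖f v‖ := by
          intro v; rw [← mul_assoc, Real.mul_self_sqrt (norm_nonneg _)]
        have e2 : ∀ v : Λ, (Real.sqrt ‖B u v‖) ^ 2 = ‖B u v‖ := fun v =>
          Real.sq_sqrt (norm_nonneg _)
        have e3 : ∀ v : Λ, (Real.sqrt ‖B u v‖ * ‖f v‖) ^ 2 = ‖B u v‖ * ‖f v‖ ^ 2 := by
          intro v; rw [mul_pow, e2]
        simpa only [e1, e2, e3] using this
      calc ‖(Matrix.toEuclideanCLM (𝕜 := ℂ) B f) u‖ ^ 2
          ≤ (∑ v, ‖B u v‖ * ‖f v‖) ^ 2 := by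
            apply pow_le_pow_left₀ (norm_nonneg _) h1
        _ ≤ (∑ v, ‖B u v‖) * ∑ v, ‖B u v‖ * ‖f v‖ ^ 2 := h2
        _ ≤ S * ∑ v, ‖B u v‖ * ‖f v‖ ^ 2 := by
            apply mul_le_mul_of_nonneg_right (hrow u)
            exact sum_nonneg fun v _ => mul_nonneg (norm_nonneg _) (sq_nonneg _)
    calc ∑ u, ‖(Matrix.toEuclideanCLM (𝕜 := ℂ) B f) u‖ ^ 2
        ≤ ∑ u, S * ∑ v, ‖B u v‖ * ‖f v‖ ^ 2 := sum_le_sum fun u _ => step1 u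
      _ = S * ∑ v, (∑ u, ‖B u v‖) * ‖f v‖ ^ 2 := by
          rw [← mul_sum, sum_comm]
          congr 1
          exact Finset.sum_congr rfl fun v _ => (sum_mul ..).symm
      _ ≤ S * ∑ v, S * ‖f v‖ ^ 2 := by
          apply mul_le_mul_of_nonneg_left _ hS
          exact sum_le_sum fun v _ => mul_le_mul_of_nonneg_right (hcol v) (sq_nonneg _)
      _ = (S * ‖f‖) ^ 2 := by
          have : ‖f‖ ^ 2 = ∑ v, ‖f v‖ ^ 2 := by
            rw [EuclideanSpace.norm_eq, Real.sq_sqrt (by positivity)]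
          rw [← mul_sum, mul_pow, this]
          ring
  have hnorm : ‖Matrix.toEuclideanCLM (𝕜 := ℂ) B f‖ ^ 2 =
      ∑ u, ‖(Matrix.toEuclideanCLM (𝕜 := ℂ) B f) u‖ ^ 2 := by
    rw [EuclideanSpace.norm_eq, Real.sq_sqrt (by positivity)]
  have h0 : 0 ≤ S * ‖f‖ := mul_nonneg hS (norm_nonneg _)
  exact (pow_le_pow_iff_left₀ (norm_nonneg _) h0 (by norm_num)).mp (hnorm ▸ key)


set_option maxHeartbeats 1600000 in
/-- abstract Combes–Thomas estimate on ℓ²(Λ) for a finite metric space Λ. -/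
theorem combes_thomas_abstract
    {Λ : Type*} [Fintype Λ] [DecidableEq Λ] [Nonempty Λ] [MetricSpace Λ]
    (H : EuclideanSpace ℂ Λ →L[ℂ] EuclideanSpace ℂ Λ) (hH : IsSelfAdjoint H)
    (z : ℂ) (μ : ℝ) (hμ : μ = Metric.infDist z (spectrum ℂ H)) (hpos : 0 < μ)
    (a : ℝ) (ha : 0 < a) (Sa : ℝ)
    (hSa : Sa = ⨆ x : Λ, ∑ y : Λ,
      ‖(inner ℂ (EuclideanSpace.single x (1 : ℂ)) (H (EuclideanSpace.single y (1 : ℂ))) : ℂ)‖ *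
        (Real.exp (a * dist x y) - 1))
    (hlt : Sa < μ) :
    ∀ x y : Λ,
      ‖(inner ℂ (EuclideanSpace.single x (1 : ℂ))
          ((Ring.inverse (H - z • (1 : EuclideanSpace ℂ Λ →L[ℂ] EuclideanSpace ℂ Λ)))
            (EuclideanSpace.single y (1 : ℂ))) : ℂ)‖ ≤
        (μ - Sa)⁻¹ * Real.exp (-a * dist x y) := by
  intro x y₀
  -- matrix of H
  set A : Matrix Λ Λ ℂ := (Matrix.toEuclideanCLM (𝕜 := ℂ)).symm H with hAdef
  have hA : Matrix.toEuclideanCLM (𝕜 := ℂ) A = H := StarAlgEquiv.apply_symm_apply _ _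
  have hadj : ContinuousLinearMap.adjoint H = H := hH
  have hAsymm : ∀ u v : Λ, ‖A u v‖ = ‖A v u‖ := by
    intro u v
    have e1 : (inner ℂ (EuclideanSpace.single u (1:ℂ))
        (H (EuclideanSpace.single v (1:ℂ))) : ℂ) = A u v := by rw [← hA, ct_entry]
    have e2 : (inner ℂ (EuclideanSpace.single v (1:ℂ))
        (H (EuclideanSpace.single u (1:ℂ))) : ℂ) = A v u := by rw [← hA, ct_entry]
    have e3 : (inner ℂ (EuclideanSpace.single u (1:ℂ))
        (H (EuclideanSpace.single v (1:ℂ))) : ℂ) =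
        starRingEnd ℂ (inner ℂ (EuclideanSpace.single v (1:ℂ))
          (H (EuclideanSpace.single u (1:ℂ))) : ℂ) := by
      conv_lhs => rw [← hadj]
      rw [ContinuousLinearMap.adjoint_inner_right]
      rw [← inner_conj_symm]
    rw [← e1, ← e2, e3, RCLike.norm_conj]
  -- kernel bound function
  set K : Λ → Λ → ℝ := fun u v => ‖A u v‖ * (Real.exp (a * dist u v) - 1) with hKdef
  have hK0 : ∀ u v, 0 ≤ K u v := by
    intro u v
    apply mul_nonneg (norm_nonneg _)
    have : (1:ℝ) ≤ Real.exp (a * dist u v) := by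
      rw [← Real.exp_zero]
      exact Real.exp_le_exp.2 (by positivity)
    linarith
  have hSaK : Sa = ⨆ x : Λ, ∑ y : Λ, K x y := by
    rw [hSa, hKdef]
    congr 1
    funext u
    refine Finset.sum_congr rfl fun v _ => ?_
    rw [← hA, ct_entry]
  have hrow : ∀ u, ∑ v, K u v ≤ Sa := by
    intro u
    rw [hSaK]
    exact le_ciSup (f := fun x : Λ => ∑ y : Λ, K x y)
      (Set.Finite.bddAbove (Set.finite_range _)) u
  have hcol : ∀ v, ∑ u, K u v ≤ Sa := by
    intro v
    have : ∑ u, K u v = ∑ u, K v u := by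
      refine Finset.sum_congr rfl fun u _ => ?_
      rw [hKdef]
      simp only
      rw [hAsymm u v, dist_comm u v]
    rw [this]; exact hrow v
  have hSa0 : 0 ≤ Sa :=
    le_trans (Finset.sum_nonneg fun v _ => hK0 x v) (hrow x)
  -- the weights
  set r : Λ → ℝ := fun u => Real.exp (a * dist u y₀) with hrdef
  have hr0 : ∀ u, 0 < r u := fun u => Real.exp_pos _
  set w : Λ → ℂ := fun u => (r u : ℂ) with hwdef
  have hw0 : ∀ u, w u ≠ 0 := fun u => by
    simp only [hwdef, ne_eq, Complex.ofReal_eq_zero]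
    exact (hr0 u).ne'
  set w' : Λ → ℂ := fun u => (w u)⁻¹ with hw'def
  set D : Matrix Λ Λ ℂ := Matrix.diagonal w with hDdef
  set D' : Matrix Λ Λ ℂ := Matrix.diagonal w' with hD'def
  have hDD' : D * D' = 1 := by
    rw [hDdef, hD'def, Matrix.diagonal_mul_diagonal,
      show (fun u => w u * w' u) = fun _ => (1:ℂ) from
        funext fun u => mul_inv_cancel₀ (hw0 u), Matrix.diagonal_one]
  have hD'D : D' * D = 1 := by
    rw [hD'def, hDdef, Matrix.diagonal_mul_diagonal,
      show (fun u => w' u * w u) = fun _ => (1:ℂ) from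
        funext fun u => inv_mul_cancel₀ (hw0 u), Matrix.diagonal_one]
  -- perturbation matrix
  set B : Matrix Λ Λ ℂ := D * A * D' - A with hBdef
  have hBentry : ∀ u v, B u v = A u v * (w u * (w v)⁻¹ - 1) := by
    intro u v
    simp only [hBdef, hDdef, hD'def, hw'def, Matrix.sub_apply, Matrix.mul_diagonal,
      Matrix.diagonal_mul]
    ring
  have hBK : ∀ u v, ‖B u v‖ ≤ K u v := by
    intro u v
    rw [hBentry, norm_mul, hKdef]
    simp only
    apply mul_le_mul_of_nonneg_left _ (norm_nonneg _)
    have hcalc : w u * (w v)⁻¹ - 1 = ((Real.exp (a * dist u y₀ - a * dist v y₀) - 1 : ℝ) : ℂ) := by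
      simp only [hwdef, hrdef, Real.exp_sub]
      push_cast
      ring
    rw [hcalc, Complex.norm_real, Real.norm_eq_abs]
    apply ct_exp_aux
    rw [← mul_sub, abs_mul, abs_of_pos ha]
    exact mul_le_mul_of_nonneg_left (abs_dist_sub_le u v y₀) ha.le
  -- CLM versions
  set T := Matrix.toEuclideanCLM (𝕜 := ℂ) B with hTdef
  have hT : ‖T‖ ≤ Sa := by
    apply ct_schur B Sa hSa0
    · intro u
      exact le_trans (Finset.sum_le_sum fun v _ => hBK u v) (hrow u)
    · intro v
      exact le_trans (Finset.sum_le_sum fun u _ => hBK u v) (hcol v)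
  set c := H - z • (1 : EuclideanSpace ℂ Λ →L[ℂ] EuclideanSpace ℂ Λ) with hcdef
  obtain ⟨hunit, hRnorm⟩ := ct_resolvent H hH z μ hμ hpos
  set R0 := Ring.inverse c with hR0def
  -- Neumann
  set t := -(R0 * T) with htdef
  have htnorm : ‖t‖ ≤ μ⁻¹ * Sa := by
    rw [htdef, norm_neg]
    exact le_trans (norm_mul_le _ _)
      (mul_le_mul hRnorm hT (norm_nonneg _) (by positivity))
  have ht1 : ‖t‖ < 1 := by
    apply lt_of_le_of_lt htnorm
    rw [← inv_mul_cancel₀ hpos.ne']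
    exact mul_lt_mul_of_pos_left hlt (by positivity)
  set v : (EuclideanSpace ℂ Λ →L[ℂ] EuclideanSpace ℂ Λ)ˣ := Units.oneSub t ht1 with hvdef
  obtain ⟨u0, hu0⟩ := id hunit
  have hu0inv : (↑u0⁻¹ : EuclideanSpace ℂ Λ →L[ℂ] EuclideanSpace ℂ Λ) = R0 := by
    rw [hR0def, hcdef, ← hu0, Ring.inverse_unit]
  set u2 : (EuclideanSpace ℂ Λ →L[ℂ] EuclideanSpace ℂ Λ)ˣ := u0 * v with hu2def
  have hu2val : (↑u2 : EuclideanSpace ℂ Λ →L[ℂ] EuclideanSpace ℂ Λ) = c + T := by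
    rw [hu2def, Units.val_mul, hu0, hvdef, Units.val_oneSub, htdef, sub_neg_eq_add,
      mul_add, mul_one, ← mul_assoc, Ring.mul_inverse_cancel c hunit, one_mul]
  have hvinv : ‖(↑v⁻¹ : EuclideanSpace ℂ Λ →L[ℂ] EuclideanSpace ℂ Λ)‖ ≤ (1 - ‖t‖)⁻¹ := by
    have h1 : (↑v⁻¹ : EuclideanSpace ℂ Λ →L[ℂ] EuclideanSpace ℂ Λ) = ∑' n : ℕ, t ^ n := rfl
    rw [h1]
    refine le_trans (tsum_geometric_le_of_norm_lt_one t ht1) ?_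
    have : ‖(1 : EuclideanSpace ℂ Λ →L[ℂ] EuclideanSpace ℂ Λ)‖ ≤ 1 :=
      ContinuousLinearMap.norm_id_le
    linarith
  have hu2inv : ‖(↑u2⁻¹ : EuclideanSpace ℂ Λ →L[ℂ] EuclideanSpace ℂ Λ)‖ ≤ (μ - Sa)⁻¹ := by
    rw [hu2def, mul_inv_rev, Units.val_mul]
    have h2 : ‖(↑v⁻¹ : EuclideanSpace ℂ Λ →L[ℂ] EuclideanSpace ℂ Λ)‖ *
        ‖(↑u0⁻¹ : EuclideanSpace ℂ Λ →L[ℂ] EuclideanSpace ℂ Λ)‖ ≤ (1 - μ⁻¹ * Sa)⁻¹ * μ⁻¹ := by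
      have hq1 : μ⁻¹ * Sa < 1 := by
        rw [← inv_mul_cancel₀ hpos.ne']
        exact mul_lt_mul_of_pos_left hlt (by positivity)
      apply mul_le_mul _ (hu0inv ▸ hRnorm) (norm_nonneg _)
        (inv_nonneg.2 (by linarith))
      refine le_trans hvinv ?_
      apply inv_anti₀ (by linarith)
      linarith
    refine le_trans (le_trans (norm_mul_le _ _) h2) (le_of_eq ?_)
    rw [← mul_inv]
    congr 1
    field_simp
  -- conjugation identity
  set N : Matrix Λ Λ ℂ := D * (A - z • 1) * D' with hNdef
  have hNB : N = (A - z • 1) + B := by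
    rw [hNdef, hBdef]
    simp only [Matrix.mul_sub, Matrix.sub_mul, Matrix.mul_smul, Matrix.smul_mul,
      Matrix.mul_one, hDD']
    abel
  have hNC : Matrix.toEuclideanCLM (𝕜 := ℂ) N = ↑u2 := by
    rw [hu2val, hNB, map_add, map_sub, map_smul, map_one, hA, ← hTdef, hcdef]
  have hmid : D' * N * D = A - z • 1 := by
    rw [hNdef]
    calc D' * (D * (A - z • 1) * D') * D
        = (D' * D) * (A - z • 1) * (D' * D) := by noncomm_ring
      _ = A - z • 1 := by rw [hD'D, one_mul, mul_one]
  set dC := Matrix.toEuclideanCLM (𝕜 := ℂ) D with hdCdef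
  set dC' := Matrix.toEuclideanCLM (𝕜 := ℂ) D' with hdC'def
  have hdCdC' : dC * dC' = 1 := by rw [hdCdef, hdC'def, ← map_mul, hDD', map_one]
  have hdC'dC : dC' * dC = 1 := by rw [hdC'def, hdCdef, ← map_mul, hD'D, map_one]
  have hAz : Matrix.toEuclideanCLM (𝕜 := ℂ) (A - z • 1) = c := by
    rw [map_sub, map_smul, map_one, hA, hcdef]
  have hceq : c = dC' * ↑u2 * dC := by
    rw [← hAz, ← hmid, map_mul, map_mul, hNC, hdCdef, hdC'def]
  have key : ∀ p q : EuclideanSpace ℂ Λ →L[ℂ] EuclideanSpace ℂ Λ,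
      dC' * p * dC * (dC' * q * dC) = dC' * (p * q) * dC := by
    intro p q
    simp only [mul_assoc]
    congr 1
    congr 1
    rw [← mul_assoc dC dC', hdCdC', one_mul]
  have hR0eq : R0 = dC' * ↑u2⁻¹ * dC := by
    have hu3 : c = ↑(⟨dC' * ↑u2 * dC, dC' * ↑u2⁻¹ * dC,
        by rw [key, Units.mul_inv, mul_one, hdC'dC],
        by rw [key, Units.inv_mul, mul_one, hdC'dC]⟩ :
        (EuclideanSpace ℂ Λ →L[ℂ] EuclideanSpace ℂ Λ)ˣ) := hceq
    rw [hR0def, hu3, Ring.inverse_unit]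
    rfl
  -- final computation
  have hDy : dC (EuclideanSpace.single y₀ (1:ℂ)) = EuclideanSpace.single y₀ (1:ℂ) := by
    apply PiLp.ext
    intro u
    rw [hdCdef, ct_apply]
    simp only [hDdef, Matrix.diagonal_apply, EuclideanSpace.single_apply, ite_mul, zero_mul,
      mul_ite, mul_zero, mul_one]
    rw [Finset.sum_ite_eq' Finset.univ y₀ (fun v => if u = v then w u else 0)]
    simp only [Finset.mem_univ, if_true]
    by_cases h : u = y₀
    · subst h
      simp [hwdef, hrdef]
    · simp [h]
  set g : EuclideanSpace ℂ Λ := (↑u2⁻¹ : EuclideanSpace ℂ Λ →L[ℂ] EuclideanSpace ℂ Λ)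
    (EuclideanSpace.single y₀ (1:ℂ)) with hgdef
  have hval : (inner ℂ (EuclideanSpace.single x (1 : ℂ))
      (R0 (EuclideanSpace.single y₀ (1 : ℂ))) : ℂ) = (w x)⁻¹ * g x := by
    rw [hR0eq]
    rw [ContinuousLinearMap.mul_apply, ContinuousLinearMap.mul_apply, hDy, ← hgdef]
    rw [EuclideanSpace.inner_single_left, map_one, one_mul]
    rw [hdC'def, ct_apply]
    simp only [hD'def, Matrix.diagonal_apply, ite_mul, zero_mul]
    rw [Finset.sum_ite_eq Finset.univ x (fun v => w' x * g v)]
    simp only [Finset.mem_univ, if_true, hw'def]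
  have hgx : ‖g x‖ ≤ (μ - Sa)⁻¹ := by
    have h1 : g x = (inner ℂ (EuclideanSpace.single x (1:ℂ)) g : ℂ) := by
      rw [EuclideanSpace.inner_single_left, map_one, one_mul]
    rw [h1]
    refine le_trans (norm_inner_le_norm _ _) ?_
    rw [EuclideanSpace.norm_single]
    simp only [norm_one, one_mul]
    refine le_trans ?_ hu2inv
    calc ‖g‖ ≤ ‖(↑u2⁻¹ : EuclideanSpace ℂ Λ →L[ℂ] EuclideanSpace ℂ Λ)‖ *
        ‖EuclideanSpace.single y₀ (1:ℂ)‖ := ContinuousLinearMap.le_opNorm _ _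
      _ = ‖(↑u2⁻¹ : EuclideanSpace ℂ Λ →L[ℂ] EuclideanSpace ℂ Λ)‖ := by
          rw [EuclideanSpace.norm_single, norm_one, mul_one]
  have hwx : ‖(w x)⁻¹‖ = Real.exp (-a * dist x y₀) := by
    rw [hwdef]
    simp only
    rw [norm_inv, Complex.norm_real, Real.norm_eq_abs, hrdef]
    simp only
    rw [abs_of_pos (Real.exp_pos _), ← Real.exp_neg, neg_mul]
  rw [hval, norm_mul, hwx, mul_comm]
  exact mul_le_mul_of_nonneg_right hgx (Real.exp_pos _).le
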